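/- arXiv:1701.06478 — 3 statements merged into one kernel-verified Lean document; each statement's English description precedes it below -/
import Mathlib

section
/- Let n ≥ 1 and let c and d be two distinct codewords of the Varshamov–Tenengolts code VT(n). Then D₊₁(c) ∩ D₊₁(d) = ∅: no binary string of length n+1 can be obtained both from c by a single insertion and from d by a single insertion. In other words, VT(n) is a single-insertion-error correcting code. -/
/-- The checksum of a binary string `c = (c_1, …, c_n)` is `Σ_{i=1}^n i·c_i`. -/
def checksum (c : List Bool) : ℕ :=
  ∑ i ∈ Finset.range c.length, (i + 1) * (c.getD i false).toNat

/-- The Varshamov–Tenengolts code `VT(n)`. -/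
def VT (n : ℕ) : Set (List Bool) :=
  {c | c.length = n ∧ (n + 1) ∣ checksum c}

/-- `ins1 x`: the set of strings obtainable from `x` by inserting one bit
(of either value) at some position. -/
def ins1 (x : List Bool) : Set (List Bool) :=
  {y | ∃ p ≤ x.length, ∃ b : Bool, y = x.take p ++ b :: x.drop p}

/-- number of ones in a binary string -/
def ones (l : List Bool) : ℕ := (l.map Bool.toNat).sum

@[simp] lemma ones_nil : ones [] = 0 := rfl

@[simp] lemma ones_cons (a : Bool) (l : List Bool) : ones (a :: l) = a.toNat + ones l := rfl

@[simp] lemma ones_append (l₁ l₂ : List Bool) : ones (l₁ ++ l₂) = ones l₁ + ones l₂ := by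
  simp [ones]

lemma ones_le (l : List Bool) : ones l ≤ l.length := by
  induction l with
  | nil => simp
  | cons a l ih =>
    have : a.toNat ≤ 1 := Bool.toNat_le a
    simp only [ones_cons, List.length_cons]
    omega

lemma ones_eq_zero {l : List Bool} (h : ones l = 0) : l = List.replicate l.length false := by
  induction l with
  | nil => simp
  | cons a l ih =>
    simp only [ones_cons] at h
    have ha : a = false := by cases a <;> simp_all
    have hl : ones l = 0 := by omega
    simpa [ha, List.replicate_succ] using ih hl

lemma ones_eq_length {l : List Bool} (h : ones l = l.length) :
    l = List.replicate l.length true := by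
  induction l with
  | nil => simp
  | cons a l ih =>
    simp only [ones_cons, List.length_cons] at h
    have h1 := ones_le l
    have ha : a = true := by
      cases a
      · exfalso; simp at h; omega
      · rfl
    have hl : ones l = l.length := by rw [ha] at h; simp at h; omega
    simpa [ha, List.replicate_succ] using ih hl

lemma ones_eq_sum (l : List Bool) :
    ones l = ∑ i ∈ Finset.range l.length, (l.getD i false).toNat := by
  induction l with
  | nil => simp
  | cons a l ih =>
    rw [ones_cons, List.length_cons, Finset.sum_range_succ']
    simp [ih, Nat.add_comm]

lemma checksum_cons (a : Bool) (l : List Bool) :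
    checksum (a :: l) = a.toNat + (checksum l + ones l) := by
  rw [checksum, List.length_cons, Finset.sum_range_succ']
  simp only [List.getD_cons_succ, List.getD_cons_zero, Nat.zero_add, Nat.one_mul]
  rw [checksum, ones_eq_sum, ← Finset.sum_add_distrib]
  have h : ∀ i, (i + 1 + 1) * (l.getD i false).toNat
      = (i + 1) * (l.getD i false).toNat + (l.getD i false).toNat := by
    intro i; ring
  simp only [h]
  omega

lemma checksum_insert : ∀ (p : ℕ) (x : List Bool) (b : Bool), p ≤ x.length →
    checksum (x.take p ++ b :: x.drop p)
      = checksum x + ((p + 1) * b.toNat + ones (x.drop p))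
  | 0, x, b, _ => by
    simp only [List.take_zero, List.drop_zero, List.nil_append, checksum_cons]
    ring
  | (p+1), [], b, h => by simp at h
  | (p+1), a :: l, b, h => by
    simp only [List.take_succ_cons, List.drop_succ_cons, List.cons_append]
    rw [checksum_cons, checksum_insert p l b (by simpa using h), checksum_cons]
    have hsplit : ones l = ones (l.take p) + ones (l.drop p) := by
      rw [← ones_append, List.take_append_drop]
    rw [ones_append, ones_cons, hsplit]
    ring

lemma vt_key (n p q : ℕ) (c d : List Bool) (b b' : Bool)
    (hc1 : c.length = n) (hd1 : d.length = n)
    (hc2 : (n + 1) ∣ checksum c) (hd2 : (n + 1) ∣ checksum d)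
    (hpq : p ≤ q) (hq : q ≤ n)
    (hy : c.take p ++ b :: c.drop p = d.take q ++ b' :: d.drop q) : c = d := by
  have hp : p ≤ n := le_trans hpq hq
  obtain ⟨m, hA, hmlen⟩ : ∃ m, d.take q = d.take p ++ m ∧ m.length = q - p := by
    refine ⟨(d.take q).drop p, ?_, ?_⟩
    · conv_lhs => rw [← List.take_append_drop p (d.take q)]
      rw [List.take_take, min_eq_left hpq]
    · rw [List.length_drop, List.length_take, hd1]
      omega
  have hy2 : c.take p ++ (b :: c.drop p) = d.take p ++ (m ++ b' :: d.drop q) := by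
    rw [hy, hA, List.append_assoc]
  obtain ⟨hA2, hB2⟩ := List.append_inj hy2
    (by rw [List.length_take, List.length_take, hc1, hd1])
  have hc' : c = d.take p ++ c.drop p := by rw [← hA2, List.take_append_drop]
  have hd' : d = d.take p ++ (m ++ d.drop q) := by
    rw [← List.append_assoc, ← hA, List.take_append_drop]
  rcases Nat.eq_or_lt_of_le hpq with hqp | hqp
  · -- p = q : no checksum needed
    subst hqp
    have hm0 : m = [] := List.length_eq_zero_iff.mp (by omega)
    rw [hm0, List.nil_append] at hB2 hd'
    injection hB2 with hb hrest
    rw [hm0, List.append_nil] at hA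
    calc c = d.take p ++ c.drop p := hc'
      _ = d.take p ++ d.drop p := by rw [hrest]
      _ = d := List.take_append_drop p d
  · -- p < q
    obtain ⟨mb, m', hmc⟩ : ∃ mb m'', m = mb :: m'' := by
      cases m with
      | nil => simp at hmlen; omega
      | cons x xs => exact ⟨x, xs, rfl⟩
    subst hmc
    rw [List.cons_append] at hB2
    injection hB2 with hb hcdrop
    subst hb
    have hm'len : m'.length = q - p - 1 := by
      simp only [List.length_cons] at hmlen; omega
    -- checksum equation
    have e1 := checksum_insert p c b (by omega)
    have e2 := checksum_insert q d b' (by omega)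
    have hEq : checksum c + ((p + 1) * b.toNat + ones (c.drop p))
        = checksum d + ((q + 1) * b'.toNat + ones (d.drop q)) := by
      rw [← e1, ← e2, hy]
    obtain ⟨k, hk⟩ := hc2
    obtain ⟨l, hl⟩ := hd2
    rw [hk, hl] at hEq
    have hbn : b.toNat ≤ 1 := Bool.toNat_le b
    have hbn' : b'.toNat ≤ 1 := Bool.toNat_le b'
    have hbu : (p + 1) * b.toNat ≤ p + 1 := by
      calc (p + 1) * b.toNat ≤ (p + 1) * 1 := Nat.mul_le_mul_left _ hbn
      _ = p + 1 := by ring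
    have hbv : (q + 1) * b'.toNat ≤ q + 1 := by
      calc (q + 1) * b'.toNat ≤ (q + 1) * 1 := Nat.mul_le_mul_left _ hbn'
      _ = q + 1 := by ring
    have hcd_le : ones (c.drop p) ≤ n - p := by
      have h1 := ones_le (c.drop p)
      rw [List.length_drop, hc1] at h1; exact h1
    have hdd_le : ones (d.drop q) ≤ n - q := by
      have h1 := ones_le (d.drop q)
      rw [List.length_drop, hd1] at h1; exact h1
    have hones_c : ones (c.drop p) = ones m' + (b'.toNat + ones (d.drop q)) := by
      rw [hcdrop]; simp
    have hm'_le : ones m' ≤ q - p - 1 := hm'len ▸ ones_le m'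
    have hlink : b.toNat = 0 ∧ (p + 1) * b.toNat = 0 ∨ b.toNat = 1 ∧ (p + 1) * b.toNat = p + 1 := by
      cases b <;> simp
    have hlink' : b'.toNat = 0 ∧ (q + 1) * b'.toNat = 0 ∨ b'.toNat = 1 ∧ (q + 1) * b'.toNat = q + 1 := by
      cases b' <;> simp
    rw [hones_c] at hEq
    have huv : (p + 1) * b.toNat + (ones m' + (b'.toNat + ones (d.drop q)))
        = (q + 1) * b'.toNat + ones (d.drop q) := by
      rcases lt_trichotomy k l with h' | h' | h'
      · have h2 : (n + 1) * k + (n + 1) ≤ (n + 1) * l := by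
          calc (n + 1) * k + (n + 1) = (n + 1) * (k + 1) := by ring
          _ ≤ (n + 1) * l := Nat.mul_le_mul_left _ h'
        omega
      · rw [h'] at hEq; omega
      · have h3 : (n + 1) * l + (n + 1) ≤ (n + 1) * k := by
          calc (n + 1) * l + (n + 1) = (n + 1) * (l + 1) := by ring
          _ ≤ (n + 1) * k := Nat.mul_le_mul_left _ h'
        omega
    -- from huv, b = b' and m' is constant equal to b'
    have hbeq : b = b' := by
      cases b <;> cases b'
      · rfl
      · exfalso; simp at huv; omega
      · exfalso; simp at huv; omega
      · rfl
    subst hbeq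
    have hrep : m' = List.replicate m'.length b := by
      cases b
      · have h0 : ones m' = 0 := by simp at huv; omega
        exact ones_eq_zero h0
      · have h0 : ones m' = m'.length := by simp at huv; omega
        exact ones_eq_length h0
    have hcomm : m' ++ [b] = b :: m' := by
      conv_lhs => rw [hrep]
      rw [← List.replicate_succ', List.replicate_succ, ← hrep]
    calc c = d.take p ++ c.drop p := hc'
      _ = d.take p ++ (m' ++ b :: d.drop q) := by rw [hcdrop]
      _ = d.take p ++ ((m' ++ [b]) ++ d.drop q) := by simp
      _ = d.take p ++ ((b :: m') ++ d.drop q) := by rw [hcomm]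
      _ = d := hd'.symm

/-- VT(n) is a single-insertion-error correcting code: the single-insertion
balls of two distinct codewords are disjoint. -/
theorem vt_single_insertion_correcting (n : ℕ) (hn : 1 ≤ n)
    (c d : List Bool) (hc : c ∈ VT n) (hd : d ∈ VT n) (hcd : c ≠ d) :
    ins1 c ∩ ins1 d = ∅ := by
  obtain ⟨hc1, hc2⟩ := hc
  obtain ⟨hd1, hd2⟩ := hd
  rw [Set.eq_empty_iff_forall_notMem]
  rintro y ⟨⟨p, hp, b, rfl⟩, ⟨q, hq, b', hy⟩⟩
  rcases le_total p q with h | h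
  · exact hcd (vt_key n p q c d b b' hc1 hd1 hc2 hd2 h (hd1 ▸ hq) hy)
  · exact hcd (vt_key n q p d c b' b hd1 hc1 hd2 hc2 h (hc1 ▸ hp) hy.symm).symm
end

section
/- Let c and d be codewords of the Varshamov–Tenengolts code VT(n). If d can be obtained from c by a single deletion followed by a single insertion (i.e., there exists a binary string w of length n−1 with w ∈ D₋₁(c) and d ∈ D₊₁(w)), then d = c. -/
/-- `del1 x`: the set of strings obtainable from `x` by deleting one bit. -/
def del1 (x : List Bool) : Set (List Bool) :=
  {w | ∃ p < x.length, w = x.take p ++ x.drop (p + 1)}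

lemma vt_sum_toNat (t : List Bool) :
    ∑ i ∈ Finset.range t.length, (t.getD i false).toNat = t.count true := by
  induction t with
  | nil => simp
  | cons x s ih =>
    rw [List.length_cons, Finset.sum_range_succ']
    simp only [List.getD_cons_succ, List.getD_cons_zero, ih, List.count_cons]
    cases x <;> simp

lemma checksum_cons_s3 (x : Bool) (t : List Bool) :
    checksum (x :: t) = x.toNat + checksum t + t.count true := by
  unfold checksum
  rw [List.length_cons, Finset.sum_range_succ']
  simp only [List.getD_cons_succ, List.getD_cons_zero]
  have h : ∀ i ∈ Finset.range t.length, (i + 1 + 1) * (t.getD i false).toNat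
      = (i + 1) * (t.getD i false).toNat + (t.getD i false).toNat := by
    intro i _; ring
  rw [Finset.sum_congr rfl h, Finset.sum_add_distrib, vt_sum_toNat]
  ring

lemma vt_count_split (t : List Bool) (q : ℕ) :
    t.count true = (t.take q).count true + (t.drop q).count true := by
  conv_lhs => rw [← List.take_append_drop q t]
  rw [List.count_append]

lemma checksum_ins (w : List Bool) (q : ℕ) (b : Bool) (hq : q ≤ w.length) :
    checksum (w.take q ++ b :: w.drop q)
      = checksum w + (q + 1) * b.toNat + (w.drop q).count true := by
  induction w generalizing q with
  | nil =>
    have : q = 0 := by simpa using hq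
    subst this
    simp [checksum_cons_s3, checksum]
  | cons x t ih =>
    cases q with
    | zero => simp [checksum_cons_s3]; ring
    | succ q' =>
      have hq' : q' ≤ t.length := by simpa using hq
      simp only [List.take_succ_cons, List.drop_succ_cons, List.cons_append,
        checksum_cons_s3, ih q' hq', List.count_append, List.count_cons,
        vt_count_split t q']
      cases b <;> simp <;> ring

lemma vt_count_drop_split (w : List Bool) (p q : ℕ) (hpq : p ≤ q) :
    (w.drop p).count true
      = ((w.drop p).take (q - p)).count true + (w.drop q).count true := by
  rw [vt_count_split (w.drop p) (q - p), List.drop_drop]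
  have e : p + (q - p) = q := by omega
  rw [e]

lemma ins_eq_of_replicate (w : List Bool) (p q : ℕ) (v : Bool)
    (hpq : p ≤ q)
    (hseg : (w.drop p).take (q - p) = List.replicate (q - p) v) :
    w.take p ++ v :: w.drop p = w.take q ++ v :: w.drop q := by
  have e : p + (q - p) = q := by omega
  have htake : w.take q = w.take p ++ List.replicate (q - p) v := by
    have h : w.take (p + (q - p)) = w.take p ++ (w.drop p).take (q - p) := List.take_add
    rw [e, hseg] at h
    exact h
  have hdrop : w.drop p = List.replicate (q - p) v ++ w.drop q := by
    conv_lhs => rw [← List.take_append_drop (q - p) (w.drop p)]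
    rw [List.drop_drop, e, hseg]
  rw [htake, hdrop, List.append_assoc]
  congr 1
  rw [← List.cons_append, ← List.replicate_succ, List.replicate_succ',
    List.append_assoc]
  rfl

/-- Key combinatorial lemma: equal adjusted weights force equal insertions. -/
lemma vt_key_s3 (w : List Bool) (p q : ℕ) (a b : Bool) (hpq : p ≤ q)
    (hq : q ≤ w.length)
    (h : (p + 1) * a.toNat + (w.drop p).count true
        = (q + 1) * b.toNat + (w.drop q).count true) :
    w.take p ++ a :: w.drop p = w.take q ++ b :: w.drop q := by
  set seg := (w.drop p).take (q - p) with hsegdef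
  have hsplit := vt_count_drop_split w p q hpq
  rw [← hsegdef] at hsplit
  have hseglen : seg.length = q - p := by
    rw [hsegdef, List.length_take, List.length_drop]
    omega
  have hsegle : seg.count true ≤ q - p := by
    have : seg.count true ≤ seg.length := List.count_le_length
    omega
  cases a <;> cases b <;> simp only [Bool.toNat_true, Bool.toNat_false,
      mul_one, mul_zero, zero_add, add_zero] at h
  · -- a = false, b = false : segment is all false
    have hzero : seg.count true = 0 := by omega
    have : ∀ x ∈ seg, x = false := by
      intro x hx
      by_contra hxne
      have : x = true := by
        cases x
        · exact absurd rfl hxne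
        · rfl
      subst this
      have := List.count_pos_iff.mpr hx
      omega
    have hrep : seg = List.replicate (q - p) false := by
      rw [← hseglen]
      exact List.eq_replicate_of_mem this
    exact ins_eq_of_replicate w p q false hpq hrep
  · -- a = false, b = true : impossible
    exfalso; omega
  · -- a = true, b = false : impossible
    exfalso; omega
  · -- a = true, b = true : segment is all true
    have hall : seg.count true = seg.length := by omega
    have hrep : seg = List.replicate (q - p) true := by
      rw [← hseglen]
      have := List.count_eq_length.mp hall
      exact List.eq_replicate_of_mem (fun x hx => (this x hx).symm)
    exact ins_eq_of_replicate w p q true hpq hrep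

/-- If a VT(n) codeword `d` is obtained from a VT(n) codeword `c` by a single
deletion followed by a single insertion, then `d = c`. -/
theorem vt_del_then_ins (n : ℕ) (c d : List Bool)
    (hc : c ∈ VT n) (hd : d ∈ VT n)
    (w : List Bool) (hwc : w ∈ del1 c) (hdw : d ∈ ins1 w) :
    d = c := by
  obtain ⟨hclen, hcdvd⟩ := hc
  obtain ⟨hdlen, hddvd⟩ := hd
  obtain ⟨p, hp, hw⟩ := hwc
  obtain ⟨q, hq, b, hdq⟩ := hdw
  -- basic length facts
  have hptake : (c.take p).length = p := by
    rw [List.length_take]; omega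
  have hwlen : w.length = n - 1 := by
    rw [hw, List.length_append, List.length_take, List.length_drop]
    omega
  -- c as an insertion into w
  set a : Bool := c.getD p false with ha
  have hwtake : w.take p = c.take p := by
    rw [hw, List.take_append, hptake, List.take_take]
    simp [Nat.sub_self, min_self]
  have hwdrop : w.drop p = c.drop (p + 1) := by
    rw [hw, List.drop_append, hptake, List.drop_take]
    simp [Nat.sub_self]
  have hcp : c = w.take p ++ a :: w.drop p := by
    rw [hwtake, hwdrop, ha]
    conv_lhs => rw [← List.take_append_drop p c]
    congr 1
    rw [List.drop_eq_getElem_cons (by omega : p < c.length)]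
    congr 1
    rw [List.getD_eq_getElem c false (by omega : p < c.length)]
  have hpw : p ≤ w.length := by omega
  have hn : 1 ≤ n := by omega
  -- checksum values
  have hcc : checksum c
      = checksum w + (p + 1) * a.toNat + (w.drop p).count true := by
    rw [hcp]; exact checksum_ins w p a hpw
  have hcd : checksum d
      = checksum w + (q + 1) * b.toNat + (w.drop q).count true := by
    rw [hdq]; exact checksum_ins w q b hq
  -- bounds
  have hA : (w.drop p).count true ≤ w.length - p := by
    have : (w.drop p).count true ≤ (w.drop p).length := List.count_le_length
    rw [List.length_drop] at this
    exact this
  have hB : (w.drop q).count true ≤ w.length - q := by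
    have : (w.drop q).count true ≤ (w.drop q).length := List.count_le_length
    rw [List.length_drop] at this
    exact this
  set X := (p + 1) * a.toNat + (w.drop p).count true with hX
  set Y := (q + 1) * b.toNat + (w.drop q).count true with hY
  have hXlt : X < n + 1 := by
    rw [hX]; cases a <;> simp [Bool.toNat] <;> omega
  have hYlt : Y < n + 1 := by
    rw [hY]; cases b <;> simp [Bool.toNat] <;> omega
  -- congruence gives X = Y
  have hXY : X = Y := by
    have hmod : X ≡ Y [MOD n + 1] := by
      have hcc' : checksum c = checksum w + X := by rw [hcc, hX, add_assoc]
      have hcd' : checksum d = checksum w + Y := by rw [hcd, hY, add_assoc]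
      refine Nat.ModEq.add_left_cancel' (checksum w) ?_
      rw [← hcc', ← hcd']
      exact (Nat.modEq_zero_iff_dvd.mpr hcdvd).trans
        (Nat.modEq_zero_iff_dvd.mpr hddvd).symm
    have h3 := hmod
    unfold Nat.ModEq at h3
    rw [Nat.mod_eq_of_lt hXlt, Nat.mod_eq_of_lt hYlt] at h3
    exact h3
  rw [hX, hY] at hXY
  rcases le_total p q with hle | hle
  · rw [hdq, hcp]
    exact (vt_key_s3 w p q a b hle hq hXY).symm
  · rw [hdq, hcp]
    exact vt_key_s3 w q p b a hle hpw hXY.symm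
end

section
/- (Correctness of Levenshtein's single-deletion decoder.) Let c be a codeword of the Varshamov–Tenengolts code VT(n) and let c′ ∈ D₋₁(c) be obtained from c by deleting one bit. Let ω be the weight of c′ and let s be the unique integer with 0 ≤ s ≤ n such that checksum(c′) + s ≡ 0 (mod n+1). If s ≤ ω, then c is recovered from c′ by inserting a 0 at the unique position such that exactly s ones of c′ lie to the right of the inserted bit (i.e., immediately to the left of the rightmost s ones of c′; if s = 0 the 0 is appended at the end). If s > ω, then c is recovered from c′ by inserting a 1 at the unique position such that exactly s − ω − 1 zeros of c′ lie to the left of the inserted bit (i.e., immediately to the right of the leftmost s − ω − 1 zeros of c′; if s − ω − 1 = 0 the 1 is inserted at the beginning). -/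
lemma sum_toNat_eq_count (v : List Bool) :
    ∑ i ∈ Finset.range v.length, (v.getD i false).toNat = v.count true := by
  induction v with
  | nil => simp
  | cons b w ih =>
    rw [List.length_cons, Finset.sum_range_succ']
    simp only [List.getD_cons_succ, List.getD_cons_zero]
    rw [ih]
    cases b <;> simp [List.count_cons]

lemma checksum_cons_s8 (b : Bool) (v : List Bool) :
    checksum (b :: v) = b.toNat + checksum v + v.count true := by
  unfold checksum
  rw [List.length_cons, Finset.sum_range_succ']
  simp only [List.getD_cons_succ, List.getD_cons_zero]
  have : ∀ i, (i + 1 + 1) * (v.getD i false).toNat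
      = (i + 1) * (v.getD i false).toNat + (v.getD i false).toNat := by
    intro i; ring
  rw [Finset.sum_congr rfl (fun i _ => this i), Finset.sum_add_distrib,
    sum_toNat_eq_count]
  ring

lemma checksum_append (u v : List Bool) :
    checksum (u ++ v) = checksum u + checksum v + u.length * v.count true := by
  induction u with
  | nil => simp [checksum]
  | cons b w ih =>
    rw [List.cons_append, checksum_cons_s8, ih, checksum_cons_s8, List.count_append]
    simp [List.length_cons]
    ring

lemma count_false_add_count_true (l : List Bool) :
    l.count false + l.count true = l.length := by
  induction l with
  | nil => simp
  | cons b t ih => cases b <;> simp [List.count_cons] <;> omega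

lemma insert_eq_of_mid (b : Bool) (l : List Bool) (q p : ℕ) (hqp : q ≤ p)
    (hp : p ≤ l.length) (hm : ∀ x ∈ (l.drop q).take (p - q), x = b) :
    l.take q ++ b :: l.drop q = l.take p ++ b :: l.drop p := by
  set m := (l.drop q).take (p - q) with hmdef
  have hmlen : m.length = p - q := by
    rw [hmdef, List.length_take, List.length_drop]; omega
  have hmrep : m = List.replicate (p - q) b := by
    rw [List.eq_replicate_iff]; exact ⟨hmlen, hm⟩
  have htake : l.take p = l.take q ++ m := by
    have : p = q + (p - q) := by omega
    rw [this, List.take_add]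
  have hdrop : l.drop q = m ++ l.drop p := by
    have h1 : l.drop q = (l.drop q).take (p - q) ++ (l.drop q).drop (p - q) :=
      (List.take_append_drop _ _).symm
    rw [List.drop_drop] at h1
    have h2 : q + (p - q) = p := by omega
    rwa [h2] at h1
  have hbm : b :: m = m ++ [b] := by
    rw [hmrep, ← List.replicate_succ, List.replicate_succ']
  rw [htake, hdrop, List.append_assoc]
  congr 1
  rw [← List.cons_append, hbm, List.append_assoc, List.singleton_append]

lemma drop_decomp (l : List Bool) (q p : ℕ) (hqp : q ≤ p) :
    l.drop q = (l.drop q).take (p - q) ++ l.drop p := by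
  have h1 : l.drop q = (l.drop q).take (p - q) ++ (l.drop q).drop (p - q) :=
    (List.take_append_drop _ _).symm
  rw [List.drop_drop] at h1
  have h2 : q + (p - q) = p := by omega
  rwa [h2] at h1

lemma take_decomp (l : List Bool) (q p : ℕ) (hqp : q ≤ p) :
    l.take p = l.take q ++ (l.drop q).take (p - q) := by
  have h2 : p = q + (p - q) := by omega
  conv_lhs => rw [h2]
  rw [List.take_add]

lemma insert_false_aux (l : List Bool) (q p : ℕ) (hqp : q ≤ p) (hp : p ≤ l.length)
    (h : (l.drop q).count true = (l.drop p).count true) :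
    l.take q ++ false :: l.drop q = l.take p ++ false :: l.drop p := by
  apply insert_eq_of_mid false l q p hqp hp
  intro x hx
  have hdrop := drop_decomp l q p hqp
  have hcnt : (l.drop q).count true
      = ((l.drop q).take (p - q)).count true + (l.drop p).count true := by
    conv_lhs => rw [hdrop]
    rw [List.count_append]
  have hzero : ((l.drop q).take (p - q)).count true = 0 := by omega
  have hnot := List.count_eq_zero.mp hzero
  cases x with
  | false => rfl
  | true => exact absurd hx hnot

lemma insert_false_eq (l : List Bool) (q p : ℕ) (hq : q ≤ l.length) (hp : p ≤ l.length)
    (h : (l.drop q).count true = (l.drop p).count true) :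
    l.take q ++ false :: l.drop q = l.take p ++ false :: l.drop p := by
  rcases le_total q p with h' | h'
  · exact insert_false_aux l q p h' hp h
  · exact (insert_false_aux l p q h' hq h.symm).symm

lemma insert_true_aux (l : List Bool) (q p : ℕ) (hqp : q ≤ p) (hp : p ≤ l.length)
    (h : (l.take q).count false = (l.take p).count false) :
    l.take q ++ true :: l.drop q = l.take p ++ true :: l.drop p := by
  apply insert_eq_of_mid true l q p hqp hp
  intro x hx
  have htake := take_decomp l q p hqp
  have hcnt : (l.take p).count false
      = (l.take q).count false + ((l.drop q).take (p - q)).count false := by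
    rw [htake, List.count_append]
  have hzero : ((l.drop q).take (p - q)).count false = 0 := by omega
  have hnot := List.count_eq_zero.mp hzero
  cases x with
  | true => rfl
  | false => exact absurd hx hnot

lemma insert_true_eq (l : List Bool) (q p : ℕ) (hq : q ≤ l.length) (hp : p ≤ l.length)
    (h : (l.take q).count false = (l.take p).count false) :
    l.take q ++ true :: l.drop q = l.take p ++ true :: l.drop p := by
  rcases le_total q p with h' | h'
  · exact insert_true_aux l q p h' hp h
  · exact (insert_true_aux l p q h' hq h.symm).symm

/-- Correctness of Levenshtein's single-deletion decoder for VT codes.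
Let `c ∈ VT(n)`, let `c'` arise from `c` by one deletion, let `ω` be the weight
of `c'`, and let `s` be the unique integer with `0 ≤ s ≤ n` and
`checksum c' + s ≡ 0 (mod n+1)`.  If `s ≤ ω`, then `c` is recovered by
inserting a `0` at the position with exactly `s` ones of `c'` to its right
(such a position exists, and any such insertion yields `c`, the inserted string
being the same for all of them).  If `s > ω`, then `c` is recovered by
inserting a `1` at the position with exactly `s − ω − 1` zeros of `c'` to its
left. -/
theorem levenshtein_decoder_correct (n : ℕ) (c : List Bool) (hc : c ∈ VT n)
    (c' : List Bool) (hc' : c' ∈ del1 c)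
    (s : ℕ) (hsn : s ≤ n) (hs : (n + 1) ∣ (checksum c' + s)) :
    (s ≤ c'.count true →
      (∃ q ≤ c'.length, (c'.drop q).count true = s) ∧
      (∀ q ≤ c'.length, (c'.drop q).count true = s →
        c = c'.take q ++ false :: c'.drop q)) ∧
    (c'.count true < s →
      (∃ q ≤ c'.length, (c'.take q).count false = s - c'.count true - 1) ∧
      (∀ q ≤ c'.length, (c'.take q).count false = s - c'.count true - 1 →
        c = c'.take q ++ true :: c'.drop q)) := by
  
  obtain ⟨hclen, hcdvd⟩ := hc
  obtain ⟨p, hp, hc'eq⟩ := hc'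
  have hpn : p < n := hclen ▸ hp
  have hlen_take : (c.take p).length = p := by
    rw [List.length_take]; omega
  have htk : c'.take p = c.take p := by
    rw [hc'eq, List.take_left' hlen_take]
  have hdr : c'.drop p = c.drop (p + 1) := by
    rw [hc'eq, List.drop_left' hlen_take]
  have hc'len : c'.length = n - 1 := by
    rw [hc'eq, List.length_append, List.length_take, List.length_drop, hclen]
    omega
  set b : Bool := c.getD p false with hbdef
  have hceq2 : c = c'.take p ++ b :: c'.drop p := by
    rw [htk, hdr]
    conv_lhs => rw [← List.take_append_drop p c]
    rw [List.drop_eq_getElem_cons hp, hbdef, List.getD_eq_getElem c false hp]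
  have hlt : (c'.take p).length = p := by rw [htk]; exact hlen_take
  have h2 : checksum c' = checksum (c'.take p) + checksum (c'.drop p)
      + p * (c'.drop p).count true := by
    conv_lhs => rw [← List.take_append_drop p c']
    rw [checksum_append, hlt]
  have hb2 : (b :: c'.drop p).count true
      = (c'.drop p).count true + b.toNat := by
    cases b <;> simp [List.count_cons]
  have hkey : checksum c = checksum c' + (p + 1) * b.toNat
      + (c'.drop p).count true := by
    calc checksum c
        = checksum (c'.take p) + checksum (b :: c'.drop p)
          + p * (b :: c'.drop p).count true := by
          conv_lhs => rw [hceq2]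
          rw [checksum_append, hlt]
      _ = checksum (c'.take p) + (b.toNat + checksum (c'.drop p)
          + (c'.drop p).count true)
          + p * ((c'.drop p).count true + b.toNat) := by
          rw [checksum_cons_s8, hb2]
      _ = (checksum (c'.take p) + checksum (c'.drop p)
          + p * (c'.drop p).count true) + (p + 1) * b.toNat
          + (c'.drop p).count true := by ring
      _ = checksum c' + (p + 1) * b.toNat + (c'.drop p).count true := by
          rw [← h2]
  -- abbreviations and counting facts
  have hzu : (c'.take p).count false + (c'.take p).count true = p := by
    have := count_false_add_count_true (c'.take p); omega
  have homega : c'.count true = (c'.take p).count true + (c'.drop p).count true := by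
    conv_lhs => rw [← List.take_append_drop p c']
    rw [List.count_append]
  have hzc : c'.count false = (c'.take p).count false + (c'.drop p).count false := by
    conv_lhs => rw [← List.take_append_drop p c']
    rw [List.count_append]
  have hlen' : c'.count false + c'.count true = c'.length :=
    count_false_add_count_true c'
  -- the value of s
  have hvle : (p + 1) * b.toNat + (c'.drop p).count true ≤ n := by
    cases b <;> simp <;> omega
  have hsval : s = (p + 1) * b.toNat + (c'.drop p).count true := by
    have e1 : checksum c' + s ≡ 0 [MOD n + 1] :=
      (Nat.modEq_zero_iff_dvd).2 hs
    have e2 : checksum c' + ((p + 1) * b.toNat + (c'.drop p).count true)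
        ≡ 0 [MOD n + 1] := by
      apply (Nat.modEq_zero_iff_dvd).2
      have : checksum c' + ((p + 1) * b.toNat + (c'.drop p).count true)
          = checksum c := by omega
      rwa [this]
    have e3 := (e1.trans e2.symm).add_left_cancel' (checksum c')
    have := e3.eq_of_lt_of_lt (by omega) (by omega)
    exact this
  constructor
  · -- insert a zero
    intro hsω
    cases hb : b with
    | true =>
      rw [hb] at hsval; simp at hsval
      omega
    | false =>
      rw [hb] at hsval; simp at hsval
      constructor
      · exact ⟨p, by omega, hsval.symm⟩
      · intro q hq hqc
        rw [hceq2, hb]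
        exact (insert_false_eq c' q p hq (by omega) (by omega)).symm
  · -- insert a one
    intro hωs
    cases hb : b with
    | false =>
      rw [hb] at hsval; simp at hsval
      omega
    | true =>
      rw [hb] at hsval; simp at hsval
      have hz : s - c'.count true - 1 = (c'.take p).count false := by omega
      constructor
      · exact ⟨p, by omega, hz.symm⟩
      · intro q hq hqc
        rw [hceq2, hb]
        exact (insert_true_eq c' q p hq (by omega) (by omega)).symm
end
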